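/- Newton's method local quadratic convergence: if f: ℝ^d → ℝ is C², μ-strongly convex, has H-Lipschitz Hessian, and x⋆ is its minimizer, then the Newton iterate x⁺ = x − (∇²f(x))⁻¹∇f(x) satisfies ‖x⁺ − x⋆‖ ≤ (H/(2μ))‖x − x⋆‖². -/

import Mathlib

open scoped RealInnerProductSpace

theorem newton_step_quadratic_convergence
    (d : ℕ) (f : EuclideanSpace ℝ (Fin d) → ℝ)
    (μ H : ℝ) (hμ : 0 < μ) (hH : 0 ≤ H)
    (hf : ContDiff ℝ 2 f)
    (hsc : ∀ x v : EuclideanSpace ℝ (Fin d), μ * ‖v‖ ^ 2 ≤ ⟪fderiv ℝ (gradient f) x v, v⟫)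
    (hLip : ∀ x y : EuclideanSpace ℝ (Fin d),
      ‖fderiv ℝ (gradient f) x - fderiv ℝ (gradient f) y‖ ≤ H * ‖x - y‖)
    (xstar : EuclideanSpace ℝ (Fin d)) (hstar : gradient f xstar = 0)
    (x xplus : EuclideanSpace ℝ (Fin d))
    (hstep : fderiv ℝ (gradient f) x (xplus - x) = -gradient f x) :
    ‖xplus - xstar‖ ≤ H / (2 * μ) * ‖x - xstar‖ ^ 2 := by
  -- differentiability of the gradient
  have hg1 : ContDiff ℝ 1 (fderiv ℝ f) := hf.fderiv_right (by norm_num)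
  have hdg : Differentiable ℝ (gradient f) := by
    have hgr : gradient f = fun y =>
        (InnerProductSpace.toDual ℝ (EuclideanSpace ℝ (Fin d))).symm (fderiv ℝ f y) := rfl
    rw [hgr]
    exact (InnerProductSpace.toDual ℝ
      (EuclideanSpace ℝ (Fin d))).symm.toContinuousLinearEquiv.differentiable.comp
      (hg1.differentiable one_ne_zero)
  set A := fderiv ℝ (gradient f) x with hA
  set v := xstar - x with hv
  set φ : ℝ → EuclideanSpace ℝ (Fin d) :=
    fun t => gradient f (x + t • v) - t • (A v) with hφdef
  have hline : ∀ t : ℝ, HasDerivAt (fun t : ℝ => x + t • v) v t := by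
    intro t
    have := ((hasDerivAt_id t).smul_const v).const_add x
    rwa [one_smul] at this
  have hφ : ∀ t : ℝ,
      HasDerivAt φ (fderiv ℝ (gradient f) (x + t • v) v - A v) t := by
    intro t
    have h1 : HasDerivAt (fun t : ℝ => gradient f (x + t • v))
        (fderiv ℝ (gradient f) (x + t • v) v) t :=
      (hdg (x + t • v)).hasFDerivAt.comp_hasDerivAt (l := gradient f) t (hline t)
    have h2 : HasDerivAt (fun t : ℝ => t • (A v)) (A v) t := by
      have := (hasDerivAt_id t).smul_const (A v)
      rwa [one_smul] at this
    exact h1.sub h2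
  have hLipW : LipschitzWith (Real.toNNReal H) (fderiv ℝ (gradient f)) := by
    apply LipschitzWith.of_dist_le_mul
    intro a b
    rw [dist_eq_norm, dist_eq_norm, Real.coe_toNNReal H hH]
    exact hLip a b
  have hcont : Continuous fun t : ℝ =>
      fderiv ℝ (gradient f) (x + t • v) v - A v := by
    have hc1 : Continuous fun t : ℝ => fderiv ℝ (gradient f) (x + t • v) :=
      hLipW.continuous.comp (continuous_const.add (continuous_id.smul continuous_const))
    exact (hc1.clm_apply continuous_const).sub continuous_const
  have hint : IntervalIntegrable
      (fun t : ℝ => fderiv ℝ (gradient f) (x + t • v) v - A v) MeasureTheory.volume 0 1 :=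
    hcont.intervalIntegrable 0 1
  have heq : (∫ t in (0:ℝ)..1, (fderiv ℝ (gradient f) (x + t • v) v - A v))
      = φ 1 - φ 0 :=
    intervalIntegral.integral_eq_sub_of_hasDerivAt (fun t _ => hφ t) hint
  have hφ1 : φ 1 = gradient f xstar - A v := by
    rw [hφdef]
    simp only [one_smul, hv]
    rw [add_sub_cancel]
  have hφ0 : φ 0 = gradient f x := by
    rw [hφdef]
    simp only [zero_smul, add_zero, sub_zero]
  have hbound : ∀ t ∈ Set.uIoc (0:ℝ) 1,
      ‖fderiv ℝ (gradient f) (x + t • v) v - A v‖ ≤ (H * ‖v‖ ^ 2) * t := by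
    intro t ht
    rw [Set.uIoc_of_le (by norm_num : (0:ℝ) ≤ 1)] at ht
    have ht0 : 0 ≤ t := le_of_lt ht.1
    have h1 : ‖fderiv ℝ (gradient f) (x + t • v) v - A v‖
        ≤ ‖fderiv ℝ (gradient f) (x + t • v) - A‖ * ‖v‖ := by
      have := (fderiv ℝ (gradient f) (x + t • v) - A).le_opNorm v
      rwa [ContinuousLinearMap.sub_apply] at this
    have h2 : ‖fderiv ℝ (gradient f) (x + t • v) - A‖ ≤ H * (t * ‖v‖) := by
      have h := hLip (x + t • v) x
      rw [add_sub_cancel_left, norm_smul, Real.norm_eq_abs, abs_of_nonneg ht0] at h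
      exact h
    calc ‖fderiv ℝ (gradient f) (x + t • v) v - A v‖
        ≤ ‖fderiv ℝ (gradient f) (x + t • v) - A‖ * ‖v‖ := h1
      _ ≤ (H * (t * ‖v‖)) * ‖v‖ :=
          mul_le_mul_of_nonneg_right h2 (norm_nonneg v)
      _ = (H * ‖v‖ ^ 2) * t := by ring
  have hnorm : ‖gradient f xstar - gradient f x - A v‖ ≤ H / 2 * ‖v‖ ^ 2 := by
    have h1 : gradient f xstar - gradient f x - A v = φ 1 - φ 0 := by
      rw [hφ1, hφ0]; abel
    rw [h1, ← heq]
    have h2 := intervalIntegral.norm_integral_le_abs_of_norm_le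
      (f := fun t : ℝ => fderiv ℝ (gradient f) (x + t • v) v - A v)
      (g := fun t : ℝ => (H * ‖v‖ ^ 2) * t)
      (μ := MeasureTheory.volume) (a := 0) (b := 1)
      ((MeasureTheory.ae_restrict_mem measurableSet_uIoc).mono hbound)
      ((continuous_const.mul continuous_id).intervalIntegrable 0 1)
    have h3 : (∫ t in (0:ℝ)..1, (H * ‖v‖ ^ 2) * t) = H / 2 * ‖v‖ ^ 2 := by
      rw [intervalIntegral.integral_const_mul, integral_id]
      norm_num
      ring
    rw [h3] at h2
    refine h2.trans (le_of_eq (abs_of_nonneg ?_))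
    positivity
  -- strong convexity lower bound
  set w := xplus - xstar with hw
  have hAw : A w = gradient f xstar - gradient f x - A v := by
    have hw2 : w = (xplus - x) - v := by rw [hw, hv]; abel
    rw [hw2, map_sub, hA, hstep, hstar]
    abel
  have hmain : μ * ‖w‖ ^ 2 ≤ (H / 2 * ‖v‖ ^ 2) * ‖w‖ := by
    calc μ * ‖w‖ ^ 2 ≤ ⟪A w, w⟫ := hsc x w
      _ ≤ ‖A w‖ * ‖w‖ := real_inner_le_norm _ _
      _ ≤ (H / 2 * ‖v‖ ^ 2) * ‖w‖ := by
          apply mul_le_mul_of_nonneg_right _ (norm_nonneg w)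
          rw [hAw]; exact hnorm
  have hvx : ‖v‖ = ‖x - xstar‖ := by rw [hv, norm_sub_rev]
  rcases eq_or_lt_of_le (norm_nonneg w) with h0 | h0
  · rw [hw] at h0
    rw [← h0]
    positivity
  · have h1 : μ * ‖w‖ ≤ H / 2 * ‖v‖ ^ 2 := by
      rw [pow_two] at hmain
      nlinarith
    have h2 : ‖w‖ ≤ H / (2 * μ) * ‖v‖ ^ 2 := by
      rw [div_mul_eq_mul_div, le_div_iff₀ (by positivity : (0:ℝ) < 2 * μ)]
      calc ‖w‖ * (2 * μ) = 2 * (μ * ‖w‖) := by ring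
        _ ≤ 2 * (H * ‖v‖ ^ 2 / 2) := by linarith
        _ = H * ‖v‖ ^ 2 := by ring
    rw [hw, hvx] at h2
    exact h2
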